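/- Let W be an additive commutative monoid (of weights), X a type (of states), and V an additive commutative monoid. Let f : Multiset (W × X) → V satisfy weight-additivity: for all w₁, w₂ ∈ W, x ∈ X, and S : Multiset (W × X), f((w₁ + w₂, x) ::ₘ S) = f((w₁, x) ::ₘ S) + f((w₂, x) ::ₘ S). Then for all m ∈ ℕ, w₁, w₂ ∈ W, x ∈ X, and S : Multiset (W × X): f(replicate m (w₁ + w₂, x) + S) = Σ_{m₁ + m₂ = m} C(m, m₁) • f(replicate m₁ (w₁, x) + replicate m₂ (w₂, x) + S), where C(m, m₁) is the binomial coefficient, • is scalar multiplication by a natural number, replicate m a denotes the multiset consisting of m copies of a, and ::ₘ denotes adjoining an element to a multiset. -/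

import Mathlib

/-- Lemma B.5 ('basis_comp_multi_expansion'). If `f` on multisets
of weight–state pairs is additive in the weights, then replicating a merged
weight `m` times expands binomially. -/
theorem stmt_14 {W X V : Type*} [AddCommMonoid W] [AddCommMonoid V]
    (f : Multiset (W × X) → V)
    (hf : ∀ (w₁ w₂ : W) (x : X) (S : Multiset (W × X)),
      f ((w₁ + w₂, x) ::ₘ S) = f ((w₁, x) ::ₘ S) + f ((w₂, x) ::ₘ S)) :
    ∀ (m : ℕ) (w₁ w₂ : W) (x : X) (S : Multiset (W × X)),
      f (Multiset.replicate m (w₁ + w₂, x) + S) =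
        ∑ p ∈ Finset.HasAntidiagonal.antidiagonal m,
          m.choose p.1 •
            f (Multiset.replicate p.1 (w₁, x) + Multiset.replicate p.2 (w₂, x) + S) := by
  intro m
  induction m with
  | zero => simp
  | succ n ih =>
    intro w₁ w₂ x S
    rw [Finset.sum_antidiagonal_choose_succ_nsmul
      (fun i j => f (Multiset.replicate i (w₁, x) + Multiset.replicate j (w₂, x) + S)) n]
    have h1 : f (Multiset.replicate (n+1) (w₁ + w₂, x) + S)
        = f (Multiset.replicate n (w₁ + w₂, x) + ((w₁, x) ::ₘ S))
          + f (Multiset.replicate n (w₁ + w₂, x) + ((w₂, x) ::ₘ S)) := by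
      rw [Multiset.replicate_succ, Multiset.cons_add, hf, ← Multiset.add_cons,
        ← Multiset.add_cons]
    rw [h1, ih w₁ w₂ x ((w₁, x) ::ₘ S), ih w₁ w₂ x ((w₂, x) ::ₘ S)]
    rw [add_comm
      (∑ ij ∈ Finset.HasAntidiagonal.antidiagonal n, n.choose ij.1 •
        f (Multiset.replicate ij.1 (w₁, x) + Multiset.replicate (ij.2 + 1) (w₂, x) + S))]
    congr 1
    · refine Finset.sum_congr rfl fun p hp => ?_
      rw [Nat.choose_symm_of_eq_add (Finset.HasAntidiagonal.mem_antidiagonal.mp hp).symm]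
      congr 2
      rw [Multiset.replicate_succ]
      simp only [← Multiset.singleton_add]
      abel
    · refine Finset.sum_congr rfl fun p _ => ?_
      congr 2
      rw [Multiset.replicate_succ]
      simp only [← Multiset.singleton_add]
      abel
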